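/- Let F ⊣ G be a Galois connection between join-semilattices L and L', with F preserving finite joins, and let L₀ be a finite subset of L. For any j in the image of G ∘ F (i.e., j = G(F(j))), the element ℓ = G(⨆ F(L₀↓j)) belongs to C_{F⊣G}(L₀) and satisfies j ∈ ℓ↑C_{F⊣G}(L₀), i.e., ℓ ≤ j and every ℓ' ∈ C_{F⊣G}(L₀) with ℓ' ≤ j satisfies ℓ' ≤ ℓ. -/
import Mathlib


open scoped Classical

theorem galois_closure_covers {L L' : Type*} [SemilatticeSup L] [OrderBot L]
    [SemilatticeSup L'] [OrderBot L'] [DecidableEq L] [DecidableEq L']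
    (F : L → L') (G : L' → L)
    (hgc : ∀ (a : L) (b : L'), F a ≤ b ↔ a ≤ G b)
    (hFbot : F ⊥ = ⊥) (hFsup : ∀ a b : L, F (a ⊔ b) = F a ⊔ F b)
    (L₀ : Finset L) (j : L) (hj : G (F j) = j) :
    G (((L₀.filter (fun s => s ≤ j)).image F).sup id) ∈
        (((L₀.image F).powerset.image (fun T => T.sup id)).image G) ∧
    G (((L₀.filter (fun s => s ≤ j)).image F).sup id) ≤ j ∧
    ∀ ℓ' ∈ (((L₀.image F).powerset.image (fun T => T.sup id)).image G),
      ℓ' ≤ j → ℓ' ≤ G (((L₀.filter (fun s => s ≤ j)).image F).sup id) := by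
  have hGmono : ∀ b b' : L', b ≤ b' → G b ≤ G b' := fun b b' h =>
    (hgc _ _).1 (le_trans ((hgc _ _).2 le_rfl) h)
  refine ⟨?_, ?_, ?_⟩
  · refine Finset.mem_image.2 ⟨_, Finset.mem_image.2 ⟨(L₀.filter (fun s => s ≤ j)).image F, ?_, rfl⟩, rfl⟩
    exact Finset.mem_powerset.2 (Finset.image_subset_image (Finset.filter_subset _ _))
  · rw [← hj]
    apply hGmono
    apply Finset.sup_le
    intro b hb
    obtain ⟨s, hs, rfl⟩ := Finset.mem_image.1 hb
    exact (hgc _ _).2 (Finset.mem_filter.1 hs).2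
  · intro ℓ' hℓ' hle
    obtain ⟨b, hb, rfl⟩ := Finset.mem_image.1 hℓ'
    obtain ⟨T, hT, rfl⟩ := Finset.mem_image.1 hb
    apply hGmono
    apply Finset.sup_le
    intro t ht
    obtain ⟨s, hs, rfl⟩ := Finset.mem_image.1 (Finset.mem_powerset.1 hT ht)
    have hsj : s ≤ j := le_trans ((hgc _ _).1 (Finset.le_sup (f := id) ht)) hle
    exact Finset.le_sup (f := id) (Finset.mem_image.2 ⟨s, Finset.mem_filter.2 ⟨hs, hsj⟩, rfl⟩)
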